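/- Let n ≥ 1 be an integer, φ = π/(2n), P = P(φ) = [[1, -tan φ],[0,0]], R = R(φ) the rotation by 2φ. Every finite product B_m B_{m-1} ⋯ B_1, where each B_i ∈ {P, R}, can be written as α · R^q · P^r · R^s, where α is a real number with |α| ≤ 1, q, s are non-negative integers, and r ∈ {0, 1}. -/

import Mathlib

open Real Matrix

noncomputable def P (φ : ℝ) : Matrix (Fin 2) (Fin 2) ℝ := !![1, -Real.tan φ; 0, 0]

noncomputable def R (φ : ℝ) : Matrix (Fin 2) (Fin 2) ℝ :=
  !![Real.cos (2*φ), -Real.sin (2*φ); Real.sin (2*φ), Real.cos (2*φ)]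

noncomputable def opNorm (A : Matrix (Fin 2) (Fin 2) ℝ) : ℝ :=
  ‖Matrix.toEuclideanCLM (𝕜 := ℝ) A‖

lemma R_pow (φ : ℝ) (q : ℕ) : R φ ^ q =
    !![Real.cos (2*q*φ), -Real.sin (2*q*φ); Real.sin (2*q*φ), Real.cos (2*q*φ)] := by
  induction q with
  | zero => simp [Matrix.one_fin_two]
  | succ k ih =>
    rw [pow_succ, ih, R]
    ext i j
    fin_cases i <;> fin_cases j <;>
      simp [Matrix.mul_apply, Fin.sum_univ_two, Nat.cast_succ] <;>
      rw [show (2:ℝ)*(k+1)*φ = 2*k*φ + 2*φ by ring] <;>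
      simp [Real.cos_add, Real.sin_add] <;> ring

lemma PRP (φ : ℝ) (q : ℕ) : P φ * R φ ^ q * P φ =
    (Real.cos (2*q*φ) - Real.tan φ * Real.sin (2*q*φ)) • P φ := by
  rw [R_pow]
  ext i j
  fin_cases i <;> fin_cases j <;>
    simp [P, Matrix.mul_apply, Fin.sum_univ_two] <;> first | tauto | ring

lemma abs_cos_add_nat_pi (x : ℝ) (t : ℕ) : |Real.cos (x + t * Real.pi)| = |Real.cos x| := by
  induction t with
  | zero => simp
  | succ k ih =>
    push_cast
    rw [show x + ((k:ℝ)+1) * Real.pi = (x + k * Real.pi) + Real.pi by ring, Real.cos_add_pi,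
      abs_neg, ih]

lemma keybound (n : ℕ) (hn : 1 ≤ n) (q : ℕ) :
    |Real.cos ((2*(q:ℝ)+1) * (Real.pi/(2*n)))| ≤ Real.cos (Real.pi/(2*n)) := by
  set φ : ℝ := Real.pi/(2*n) with hφ
  have hn0 : (0:ℝ) < 2*n := by positivity
  have hφ0 : 0 ≤ φ := by positivity
  have h2nφ : (2*n : ℝ) * φ = Real.pi := by rw [hφ]; field_simp
  set m : ℕ := 2*q+1 with hm
  set k : ℕ := m % (2*n) with hk
  set t : ℕ := m / (2*n) with ht
  have hmk : (m:ℝ) * φ = k * φ + t * Real.pi := by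
    have : 2*n*t + k = m := Nat.div_add_mod m (2*n)
    rw [← h2nφ, ← this]
    push_cast
    ring
  have hkodd : k % 2 = 1 := by
    rw [hk, Nat.mod_mod_of_dvd _ ⟨n, rfl⟩, hm]
    omega
  have hk1 : 1 ≤ k := by omega
  have hklt : k < 2*n := Nat.mod_lt _ (by omega)
  have hcast : ((2*(q:ℝ)+1)) = (m:ℝ) := by rw [hm]; push_cast; ring
  rw [hcast, hmk, abs_cos_add_nat_pi]
  have hkφ_le : (k:ℝ) * φ ≤ Real.pi - φ := by
    have : (k:ℝ) ≤ 2*n - 1 := by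
      have : (k:ℝ) + 1 ≤ 2*n := by exact_mod_cast hklt
      linarith
    nlinarith [hφ0]
  have hφ_le : φ ≤ (k:ℝ) * φ := by
    have : (1:ℝ) ≤ k := by exact_mod_cast hk1
    nlinarith
  have hπ : φ ≤ Real.pi := by
    rw [hφ, div_le_iff₀ hn0]
    nlinarith [Real.pi_pos, (by exact_mod_cast hn : (1:ℝ) ≤ n)]
  rw [abs_le]
  constructor
  · have := Real.cos_pi_sub φ
    have h := Real.cos_le_cos_of_nonneg_of_le_pi (by positivity : 0 ≤ (k:ℝ)*φ)
      (by linarith : Real.pi - φ ≤ Real.pi) hkφ_le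
    linarith
  · exact Real.cos_le_cos_of_nonneg_of_le_pi hφ0 (by linarith) hφ_le

lemma c_bound (n : ℕ) (hn : 1 ≤ n) (φ : ℝ) (hφ : φ = Real.pi / (2 * (n : ℝ))) (q : ℕ) :
    |Real.cos (2*q*φ) - Real.tan φ * Real.sin (2*q*φ)| ≤ 1 := by
  rcases eq_or_lt_of_le hn with h1 | h2
  · -- n = 1, φ = π/2, tan φ = 0
    have : φ = Real.pi / 2 := by rw [hφ, ← h1]; norm_num
    rw [this, Real.tan_pi_div_two]
    simpa using Real.abs_cos_le_one (2*q*(Real.pi/2))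
  · -- n ≥ 2, cos φ > 0
    have hn2 : (2:ℝ) ≤ n := by exact_mod_cast h2
    have hφpos : 0 < φ := by rw [hφ]; positivity
    have hφlt : φ < Real.pi / 2 := by
      rw [hφ]
      rw [div_lt_div_iff₀ (by positivity) (by norm_num)]
      nlinarith [Real.pi_pos]
    have hcos : 0 < Real.cos φ :=
      Real.cos_pos_of_mem_Ioo ⟨by linarith, hφlt⟩
    have key : (Real.cos (2*q*φ) - Real.tan φ * Real.sin (2*q*φ)) * Real.cos φ
        = Real.cos ((2*(q:ℝ)+1) * φ) := by
      rw [Real.tan_eq_sin_div_cos]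
      field_simp
      rw [show φ * (2*(q:ℝ)+1) = 2*q*φ + φ by ring, Real.cos_add]
      ring
    have hb := keybound n hn q
    rw [← hφ] at hb
    have : |Real.cos (2*q*φ) - Real.tan φ * Real.sin (2*q*φ)| * Real.cos φ ≤ 1 * Real.cos φ := by
      rw [one_mul, ← abs_of_pos hcos, ← abs_mul, key]
      calc |Real.cos ((2*(q:ℝ)+1) * φ)| ≤ Real.cos φ := hb
        _ ≤ |Real.cos φ| := le_abs_self _
    exact le_of_mul_le_mul_right (by linarith) hcos

theorem stmt5 (n : ℕ) (hn : 1 ≤ n) (φ : ℝ) (hφ : φ = Real.pi / (2 * (n : ℝ)))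
    (l : List (Matrix (Fin 2) (Fin 2) ℝ)) (hl : ∀ B ∈ l, B = P φ ∨ B = R φ) :
    ∃ (α : ℝ) (q s r : ℕ), |α| ≤ 1 ∧ (r = 0 ∨ r = 1) ∧
      l.prod = α • ((R φ) ^ q * (P φ) ^ r * (R φ) ^ s) := by
  induction l with
  | nil => exact ⟨1, 0, 0, 0, by norm_num, Or.inl rfl, by simp⟩
  | cons B t ih =>
    obtain ⟨α, q, s, r, hα, hr, hprod⟩ := ih (fun C hC => hl C (List.mem_cons_of_mem _ hC))
    rcases hl B List.mem_cons_self with hB | hB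
    · -- B = P φ
      rcases hr with hr0 | hr1
      · refine ⟨α, 0, q + s, 1, hα, Or.inr rfl, ?_⟩
        rw [List.prod_cons, hprod, hB, hr0]
        rw [Matrix.mul_smul]
        congr 1
        rw [pow_zero, pow_one, mul_one, pow_add, pow_zero, one_mul, ← mul_assoc]
      · refine ⟨α * (Real.cos (2*q*φ) - Real.tan φ * Real.sin (2*q*φ)), 0, s, 1,
          ?_, Or.inr rfl, ?_⟩
        · rw [abs_mul]
          exact mul_le_one₀ hα (abs_nonneg _) (c_bound n hn φ hφ q)
        · rw [List.prod_cons, hprod, hB, hr1]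
          rw [Matrix.mul_smul, pow_one]
          rw [show P φ * (R φ ^ q * P φ * R φ ^ s) = (P φ * R φ ^ q * P φ) * R φ ^ s by
            noncomm_ring]
          rw [PRP, Matrix.smul_mul, smul_smul, pow_zero, one_mul]
    · -- B = R φ
      refine ⟨α, q + 1, s, r, hα, hr, ?_⟩
      rw [List.prod_cons, hprod, hB, Matrix.mul_smul]
      congr 1
      rw [pow_succ', ← mul_assoc, ← mul_assoc]
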